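/- Let \Omega be a regular cell complex whose geometric realization is a compact even-dimensional manifold M of dimension n. Then the flag h-vector of the face poset P of \Omega (a graded poset of rank n+2) satisfies h_S - h_{\bar{S}} = (-1)^{|S|}(2 - \chi(M)) for every S \subseteq {1,...,n+1}, where \bar{S} is the complement of S and \chi(M) is the Euler characteristic. If n is odd, then h_S = h_{\bar{S}} for all S. -/

import Mathlib

open Finset

/-- The ring `ℤ⟨a,b⟩` of noncommutative polynomials in the variables `a` and `b`,
realized as the monoid algebra of the free monoid on two letters
(`false` encodes the letter `a` and `true` the letter `b`). -/
abbrev AB : Type := MonoidAlgebra ℤ (FreeMonoid Bool)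

/-- The variable `a`. -/
noncomputable def aV : AB := MonoidAlgebra.single (FreeMonoid.ofList [false]) 1

/-- The variable `b`. -/
noncomputable def bV : AB := MonoidAlgebra.single (FreeMonoid.ofList [true]) 1

/-- The `ab`-monomial `u_S` of degree `n`, with `b` in the positions of `S`. -/
def word (n : ℕ) (S : Finset ℕ) : FreeMonoid Bool :=
  FreeMonoid.ofList (List.ofFn fun i : Fin n => decide ((i : ℕ) + 1 ∈ S))

/-- The flag `f`-vector entry `f_S`. -/
noncomputable def flagF (P : Type*) [PartialOrder P] (ρ : P → ℕ) (S : Finset ℕ) : ℤ :=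
  ({c : Finset P | IsChain (· ≤ ·) (↑c : Set P) ∧ c.image ρ = S} : Set (Finset P)).ncard

/-- The flag `h`-vector entry `h_S`. -/
noncomputable def flagH (P : Type*) [PartialOrder P] (ρ : P → ℕ) (S : Finset ℕ) : ℤ :=
  ∑ T ∈ S.powerset, (-1) ^ (S.card - T.card) * flagF P ρ T

/-- The `ab`-index `Ψ(P) = ∑_S h_S u_S` of a poset `P` of rank `n+1` with rank
function `ρ` (the elements of ranks `1,…,n` are the proper part of `P`). -/
noncomputable def Psi (P : Type*) [PartialOrder P] (ρ : P → ℕ) (n : ℕ) : AB :=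
  ∑ S ∈ (Finset.Icc 1 n).powerset, MonoidAlgebra.single (word n S) (flagH P ρ S)


open scoped Classical

/-- Extend a function on `ab`-monomials linearly to all of `ℤ⟨a,b⟩`. -/
noncomputable def extendMon (g : List Bool → AB) : AB → AB := fun w =>
  w.coeff.sum fun m c => c • g (FreeMonoid.toList m)

/-- The Möbius function of a finite poset. -/
noncomputable def muP (P : Type*) [PartialOrder P] [Fintype P] (x y : P) : ℤ :=
  letI := Classical.decEq P
  letI : @DecidableRel P P (· < ·) := Classical.decRel _
  letI : @DecidableRel P P (· ≤ ·) := Classical.decRel _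
  letI := Fintype.toLocallyFiniteOrder (α := P)
  IncidenceAlgebra.mu ℤ x y


set_option linter.unusedSectionVars false

section ChainTools

variable {P : Type*} [PartialOrder P] [Fintype P]

/-- The finset of (finsets which are) chains contained in the open interval `(a,b)`. -/
noncomputable def chainsIn (a b : P) : Finset (Finset P) :=
  Finset.univ.filter (fun c => IsChain (· ≤ ·) (↑c : Set P) ∧ (↑c : Set P) ⊆ Set.Ioo a b)

lemma mem_chainsIn {a b : P} {c : Finset P} :
    c ∈ chainsIn a b ↔ IsChain (· ≤ ·) (↑c : Set P) ∧ (↑c : Set P) ⊆ Set.Ioo a b := by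
  simp [chainsIn]

lemma empty_mem_chainsIn (a b : P) : (∅ : Finset P) ∈ chainsIn a b := by
  refine mem_chainsIn.2 ⟨by simp [IsChain.empty], by simp⟩

lemma card_insert_union_chains (y : P) {c₁ c₂ : Finset P}
    (h1 : ∀ z ∈ c₁, z < y) (h2 : ∀ z ∈ c₂, y < z) :
    (insert y (c₁ ∪ c₂)).card = c₁.card + c₂.card + 1 := by
  have hy : y ∉ c₁ ∪ c₂ := by
    simp only [Finset.mem_union]
    rintro (h | h)
    · exact absurd (h1 y h) (lt_irrefl y)
    · exact absurd (h2 y h) (lt_irrefl y)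
  have hdisj : Disjoint c₁ c₂ := by
    rw [Finset.disjoint_left]
    intro z hz1 hz2
    exact absurd ((h1 z hz1).trans (h2 z hz2)) (lt_irrefl z)
  rw [Finset.card_insert_of_notMem hy, Finset.card_union_of_disjoint hdisj]

/-- Splitting a chain containing `y` into its parts below and above `y`. -/
lemma sum_chainsIn_split (a b y : P) (hay : a < y) (hyb : y < b) (w : Finset P → ℤ) :
    (∑ c ∈ chainsIn a b, if y ∈ c then w c else 0)
      = ∑ c₁ ∈ chainsIn a y, ∑ c₂ ∈ chainsIn y b, w (insert y (c₁ ∪ c₂)) := by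
  rw [← Finset.sum_filter, ← Finset.sum_product']
  refine Finset.sum_nbij' (fun c => (c.filter (· < y), c.filter (y < ·)))
    (fun p => insert y (p.1 ∪ p.2)) ?_ ?_ ?_ ?_ ?_
  · -- forward membership
    intro c hc
    rw [Finset.mem_filter] at hc
    obtain ⟨hc, hyc⟩ := hc
    rw [mem_chainsIn] at hc
    obtain ⟨hch, hsub⟩ := hc
    rw [Finset.mem_product]
    constructor
    · rw [mem_chainsIn]
      refine ⟨hch.mono ?_, ?_⟩
      · intro z hz
        simp only [Finset.coe_filter, Set.mem_setOf_eq] at hz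
        exact hz.1
      · intro z hz
        simp only [Finset.coe_filter, Set.mem_setOf_eq] at hz
        exact ⟨(hsub hz.1).1, hz.2⟩
    · rw [mem_chainsIn]
      refine ⟨hch.mono ?_, ?_⟩
      · intro z hz
        simp only [Finset.coe_filter, Set.mem_setOf_eq] at hz
        exact hz.1
      · intro z hz
        simp only [Finset.coe_filter, Set.mem_setOf_eq] at hz
        exact ⟨hz.2, (hsub hz.1).2⟩
  · -- backward membership
    rintro ⟨c₁, c₂⟩ hp
    rw [Finset.mem_product] at hp
    obtain ⟨h1, h2⟩ := hp
    rw [mem_chainsIn] at h1 h2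
    obtain ⟨hch1, hsub1⟩ := h1
    obtain ⟨hch2, hsub2⟩ := h2
    have hlt1 : ∀ z ∈ c₁, z < y := fun z hz => (hsub1 hz).2
    have hgt2 : ∀ z ∈ c₂, y < z := fun z hz => (hsub2 hz).1
    rw [Finset.mem_filter, mem_chainsIn]
    refine ⟨⟨?_, ?_⟩, by simp⟩
    · intro z hz t ht hzt
      simp only [Finset.coe_insert, Set.mem_insert_iff, Finset.coe_union, Set.mem_union,
        Finset.mem_coe] at hz ht
      rcases hz with rfl | hz | hz <;> rcases ht with rfl | ht | ht
      · exact absurd rfl hzt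
      · exact Or.inr (hlt1 t ht).le
      · exact Or.inl (hgt2 t ht).le
      · exact Or.inl (hlt1 z hz).le
      · exact hch1 hz ht hzt
      · exact Or.inl ((hlt1 z hz).trans (hgt2 t ht)).le
      · exact Or.inr (hgt2 z hz).le
      · exact Or.inr ((hlt1 t ht).trans (hgt2 z hz)).le
      · exact hch2 hz ht hzt
    · intro z hz
      simp only [Finset.coe_insert, Set.mem_insert_iff, Finset.coe_union, Set.mem_union,
        Finset.mem_coe] at hz
      rcases hz with rfl | hz | hz
      · exact ⟨hay, hyb⟩
      · exact ⟨(hsub1 hz).1, (hlt1 z hz).trans hyb⟩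
      · exact ⟨hay.trans (hgt2 z hz), (hsub2 hz).2⟩
  · -- left inverse
    intro c hc
    rw [Finset.mem_filter] at hc
    obtain ⟨hc, hyc⟩ := hc
    rw [mem_chainsIn] at hc
    obtain ⟨hch, _⟩ := hc
    ext z
    simp only [Finset.mem_insert, Finset.mem_union, Finset.mem_filter]
    constructor
    · rintro (rfl | ⟨hz, _⟩ | ⟨hz, _⟩) <;> assumption
    · intro hz
      by_cases hzy : z = y
      · exact Or.inl hzy
      · rcases hch hz hyc hzy with h | h
        · exact Or.inr (Or.inl ⟨hz, lt_of_le_of_ne h hzy⟩)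
        · exact Or.inr (Or.inr ⟨hz, lt_of_le_of_ne h (Ne.symm hzy)⟩)
  · -- right inverse
    rintro ⟨c₁, c₂⟩ hp
    rw [Finset.mem_product] at hp
    obtain ⟨h1, h2⟩ := hp
    rw [mem_chainsIn] at h1 h2
    have hlt1 : ∀ z ∈ c₁, z < y := fun z hz => (h1.2 hz).2
    have hgt2 : ∀ z ∈ c₂, y < z := fun z hz => (h2.2 hz).1
    have e1 : (insert y (c₁ ∪ c₂)).filter (· < y) = c₁ := by
      ext z
      simp only [Finset.mem_filter, Finset.mem_insert, Finset.mem_union]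
      constructor
      · rintro ⟨rfl | hz | hz, hlt⟩
        · exact absurd hlt (lt_irrefl _)
        · exact hz
        · exact absurd (hgt2 z hz) (asymm hlt)
      · intro hz
        exact ⟨Or.inr (Or.inl hz), hlt1 z hz⟩
    have e2 : (insert y (c₁ ∪ c₂)).filter (y < ·) = c₂ := by
      ext z
      simp only [Finset.mem_filter, Finset.mem_insert, Finset.mem_union]
      constructor
      · rintro ⟨rfl | hz | hz, hlt⟩
        · exact absurd hlt (lt_irrefl _)
        · exact absurd (hlt1 z hz) (asymm hlt)
        · exact hz
      · intro hz
        exact ⟨Or.inr (Or.inr hz), hgt2 z hz⟩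
    simp [e1, e2]
  · -- summand equality
    intro c hc
    rw [Finset.mem_filter] at hc
    obtain ⟨hc', hyc⟩ := hc
    rw [mem_chainsIn] at hc'
    obtain ⟨hch, _⟩ := hc'
    have : insert y ((c.filter (· < y)) ∪ (c.filter (y < ·))) = c := by
      ext z
      simp only [Finset.mem_insert, Finset.mem_union, Finset.mem_filter]
      constructor
      · rintro (rfl | ⟨hz, _⟩ | ⟨hz, _⟩) <;> assumption
      · intro hz
        by_cases hzy : z = y
        · exact Or.inl hzy
        · rcases hch hz hyc hzy with h | h
          · exact Or.inr (Or.inl ⟨hz, lt_of_le_of_ne h hzy⟩)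
          · exact Or.inr (Or.inr ⟨hz, lt_of_le_of_ne h (Ne.symm hzy)⟩)
    rw [this]

end ChainTools

section Hall

variable {P : Type*} [PartialOrder P] [Fintype P]

/-- The alternating sum over chains in the open interval `(a,b)`. -/
noncomputable def Nch (a b : P) : ℤ := ∑ c ∈ chainsIn a b, (-1) ^ c.card

noncomputable def IooF (a b : P) : Finset P :=
  Finset.univ.filter (fun z => a < z ∧ z < b)

lemma mem_IooF {a b z : P} : z ∈ IooF a b ↔ a < z ∧ z < b := by simp [IooF]

lemma Nch_rec (a b : P) :
    Nch a b = 1 + ∑ z ∈ IooF a b, -(Nch z b) := by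
  have pointwise : ∀ c ∈ chainsIn a b, ((-1 : ℤ)) ^ c.card =
      (if c = ∅ then 1 else 0) +
        ∑ z ∈ IooF a b, (if z ∈ c ∧ (∀ t ∈ c, ¬ t < z) then (-1 : ℤ) ^ c.card else 0) := by
    intro c hc
    rw [mem_chainsIn] at hc
    obtain ⟨hch, hsub⟩ := hc
    by_cases hce : c = ∅
    · subst hce
      simp
    · have hcne : c.Nonempty := Finset.nonempty_iff_ne_empty.2 hce
      obtain ⟨m, hm, hmin'⟩ := c.exists_minimal hcne
      have hmin : ∀ t ∈ c, ¬ t < m := fun t ht htm => htm.not_ge (hmin' ht htm.le)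
      rw [if_neg hce]
      have : ∑ z ∈ IooF a b, (if z ∈ c ∧ (∀ t ∈ c, ¬ t < z) then (-1 : ℤ) ^ c.card else 0)
          = (-1 : ℤ) ^ c.card := by
        rw [Finset.sum_eq_single m]
        · rw [if_pos ⟨hm, hmin⟩]
        · intro z hz hzm
          rw [if_neg]
          rintro ⟨hzc, hzmin⟩
          rcases hch hzc hm hzm with h | h
          · exact hmin z hzc (lt_of_le_of_ne h hzm)
          · exact hzmin m hm (lt_of_le_of_ne h (Ne.symm hzm))
        · intro hm'
          exact absurd (mem_IooF.2 (hsub hm)) hm'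
      rw [this]
      ring
  rw [Nch, Finset.sum_congr rfl pointwise, Finset.sum_add_distrib]
  congr 1
  · rw [Finset.sum_ite_eq' (chainsIn a b) ∅ (fun _ => (1:ℤ))]
    simp [empty_mem_chainsIn]
  · rw [Finset.sum_comm]
    refine Finset.sum_congr rfl fun z hz => ?_
    rw [mem_IooF] at hz
    have key := sum_chainsIn_split a b z hz.1 hz.2
      (fun c => if (∀ t ∈ c, ¬ t < z) then (-1 : ℤ) ^ c.card else 0)
    have lhs_eq : (∑ c ∈ chainsIn a b, if z ∈ c ∧ (∀ t ∈ c, ¬ t < z)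
        then (-1 : ℤ) ^ c.card else 0)
        = (∑ c ∈ chainsIn a b, if z ∈ c then
            (if (∀ t ∈ c, ¬ t < z) then (-1 : ℤ) ^ c.card else 0) else 0) := by
      refine Finset.sum_congr rfl fun c _ => ?_
      rw [ite_and]
    rw [lhs_eq, key]
    have rhs_eq : ∀ c₁ ∈ chainsIn a z, ∀ c₂ ∈ chainsIn z b,
        (if (∀ t ∈ insert z (c₁ ∪ c₂), ¬ t < z) then (-1 : ℤ) ^ (insert z (c₁ ∪ c₂)).card else 0)
        = (if c₁ = ∅ then 1 else 0) * (-(-1 : ℤ) ^ c₂.card) := by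
      intro c₁ h1 c₂ h2
      rw [mem_chainsIn] at h1 h2
      have hlt1 : ∀ t ∈ c₁, t < z := fun t ht => (h1.2 ht).2
      have hgt2 : ∀ t ∈ c₂, z < t := fun t ht => (h2.2 ht).1
      by_cases hc1 : c₁ = ∅
      · subst hc1
        rw [if_pos, if_pos rfl, card_insert_union_chains z (by simp) hgt2]
        · simp [pow_succ]
        · intro t ht
          simp only [Finset.mem_insert, Finset.empty_union] at ht
          rcases ht with rfl | ht
          · exact lt_irrefl _
          · exact asymm (hgt2 t ht)
      · obtain ⟨t, ht⟩ := Finset.nonempty_iff_ne_empty.2 hc1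
        rw [if_neg, if_neg hc1, zero_mul]
        intro hall
        exact hall t (by simp [ht]) (hlt1 t ht)
    rw [Finset.sum_congr rfl (fun c₁ h1 => Finset.sum_congr rfl (fun c₂ h2 => rhs_eq c₁ h1 c₂ h2))]
    rw [← Finset.sum_mul_sum]
    rw [Finset.sum_ite_eq' (chainsIn a z) ∅ (fun _ => (1:ℤ))]
    simp only [empty_mem_chainsIn, if_pos]
    rw [Nch]
    simp [Finset.sum_neg_distrib]

end Hall

section MuLink

variable {P : Type*} [PartialOrder P] [Fintype P]

lemma Nch_eq_neg_mu [DecidableEq P] [LocallyFiniteOrder P] :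
    ∀ (a b : P), a < b → Nch a b = - IncidenceAlgebra.mu ℤ a b := by
  suffices H : ∀ (k : ℕ) (a b : P), (IooF a b).card = k → a < b →
      Nch a b = - IncidenceAlgebra.mu ℤ a b by
    intro a b hab
    exact H _ a b rfl hab
  intro k
  induction k using Nat.strong_induction_on with
  | _ k IH =>
    intro a b hk hab
    have hioo : Finset.Ioo a b = IooF a b := by
      ext z
      simp [Finset.mem_Ioo, mem_IooF]
    have hicc : Finset.Icc a b = insert a (insert b (IooF a b)) := by
      ext z
      simp only [Finset.mem_Icc, Finset.mem_insert, mem_IooF]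
      constructor
      · rintro ⟨h1, h2⟩
        rcases eq_or_lt_of_le h1 with rfl | h1'
        · exact Or.inl rfl
        · rcases eq_or_lt_of_le h2 with rfl | h2'
          · exact Or.inr (Or.inl rfl)
          · exact Or.inr (Or.inr ⟨h1', h2'⟩)
      · rintro (rfl | rfl | ⟨h1, h2⟩)
        · exact ⟨le_refl _, hab.le⟩
        · exact ⟨hab.le, le_refl _⟩
        · exact ⟨h1.le, h2.le⟩
    have hanotin : a ∉ insert b (IooF a b) := by
      simp only [Finset.mem_insert, mem_IooF]
      rintro (rfl | ⟨h1, _⟩)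
      · exact absurd hab (lt_irrefl _)
      · exact absurd h1 (lt_irrefl _)
    have hbnotin : b ∉ IooF a b := by
      simp only [mem_IooF]
      rintro ⟨_, h2⟩
      exact absurd h2 (lt_irrefl _)
    have hsum := IncidenceAlgebra.sum_Icc_mu_left (𝕜 := ℤ) a b
    rw [if_neg hab.ne, hicc, Finset.sum_insert hanotin, Finset.sum_insert hbnotin,
      IncidenceAlgebra.mu_self] at hsum
    -- hsum : mu a b + (1 + ∑ z in IooF a b, mu z b) = 0
    have hstep : ∀ z ∈ IooF a b, Nch z b = - IncidenceAlgebra.mu ℤ z b := by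
      intro z hz
      rw [mem_IooF] at hz
      have hsubset : IooF z b ⊆ IooF a b := by
        intro w hw
        rw [mem_IooF] at hw ⊢
        exact ⟨hz.1.trans hw.1, hw.2⟩
      have hssubset : IooF z b ⊂ IooF a b := by
        refine Finset.ssubset_iff_of_subset hsubset |>.2 ⟨z, mem_IooF.2 hz, ?_⟩
        rw [mem_IooF]
        rintro ⟨h1, _⟩
        exact absurd h1 (lt_irrefl _)
      have hcard : (IooF z b).card < k := hk ▸ Finset.card_lt_card hssubset
      exact IH _ hcard z b rfl hz.2
    rw [Nch_rec a b, Finset.sum_congr rfl (fun z hz => by rw [hstep z hz])]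
    simp only [neg_neg]
    linarith [hsum]

lemma Nch_eq_neg_muP (a b : P) (hab : a < b) : Nch a b = - muP P a b := by
  unfold muP
  letI := Classical.decEq P
  letI : @DecidableRel P P (· < ·) := Classical.decRel _
  letI : @DecidableRel P P (· ≤ ·) := Classical.decRel _
  letI := Fintype.toLocallyFiniteOrder (α := P)
  exact Nch_eq_neg_mu a b hab

end MuLink



section GF

variable {P : Type*} [PartialOrder P] [Fintype P] [BoundedOrder P]

noncomputable def Gch (ρ : P → ℕ) (x : P) (U : Finset ℕ) : ℤ :=
  ∑ c ∈ chainsIn (⊥ : P) x, if U ⊆ c.image ρ then (-1 : ℤ) ^ c.card else 0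

noncomputable def Fch (ρ : P → ℕ) (x : P) (U : Finset ℕ) : ℤ :=
  ∑ c ∈ chainsIn (⊥ : P) x, if c.image ρ = U then (1 : ℤ) else 0

lemma chain_rank_inj (ρ : P → ℕ) (hstrict : ∀ x y : P, x < y → ρ x < ρ y)
    {c : Finset P} (hch : IsChain (· ≤ ·) (↑c : Set P)) {y z : P}
    (hy : y ∈ c) (hz : z ∈ c) (h : ρ y = ρ z) : y = z := by
  by_contra hne
  rcases hch (Finset.mem_coe.mpr hy) (Finset.mem_coe.mpr hz) hne with hle | hle
  · exact absurd h (Nat.ne_of_lt (hstrict _ _ (lt_of_le_of_ne hle hne)))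
  · exact absurd h.symm (Nat.ne_of_lt (hstrict _ _ (lt_of_le_of_ne hle (Ne.symm hne))))

lemma Fch_empty (ρ : P → ℕ) (x : P) : Fch ρ x ∅ = 1 := by
  rw [Fch]
  rw [Finset.sum_congr rfl (fun c _ => by
    simp only [Finset.image_eq_empty] :
    ∀ c ∈ chainsIn (⊥:P) x, (if c.image ρ = ∅ then (1:ℤ) else 0) = if c = ∅ then 1 else 0)]
  rw [Finset.sum_ite_eq' (chainsIn (⊥:P) x) ∅ (fun _ => (1:ℤ))]
  simp [empty_mem_chainsIn]

lemma Gch_empty (ρ : P → ℕ) (x : P) : Gch ρ x ∅ = Nch (⊥ : P) x := by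
  simp [Gch, Nch]

/-- Group chains by the (unique) element of rank `u`. -/
lemma group_by_rank (ρ : P → ℕ) (hstrict : ∀ x y : P, x < y → ρ x < ρ y)
    (x : P) (u : ℕ) (X : Finset P → ℤ) (Q : Finset P → Prop) [DecidablePred Q]
    (hQ : ∀ c, Q c → u ∈ c.image ρ) :
    (∑ c ∈ chainsIn (⊥ : P) x, if Q c then X c else 0) =
      ∑ y ∈ (IooF (⊥ : P) x).filter (fun y => ρ y = u),
        ∑ c ∈ chainsIn (⊥ : P) x, (if y ∈ c ∧ Q c then X c else 0) := by
  rw [Finset.sum_comm]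
  refine Finset.sum_congr rfl fun c hc => ?_
  rw [mem_chainsIn] at hc
  obtain ⟨hch, hsub⟩ := hc
  by_cases hq : Q c
  · rw [if_pos hq]
    obtain ⟨y₀, hy₀c, hy₀ρ⟩ := Finset.mem_image.mp (hQ c hq)
    have hy₀Y : y₀ ∈ (IooF (⊥ : P) x).filter (fun y => ρ y = u) := by
      rw [Finset.mem_filter, mem_IooF]
      exact ⟨⟨(hsub (Finset.mem_coe.mpr hy₀c)).1, (hsub (Finset.mem_coe.mpr hy₀c)).2⟩, hy₀ρ⟩
    symm
    rw [Finset.sum_eq_single_of_mem y₀ hy₀Y (fun y hy hne => ?_)]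
    · rw [if_pos ⟨hy₀c, hq⟩]
    · rw [Finset.mem_filter] at hy
      rw [if_neg]
      rintro ⟨hyc, -⟩
      exact hne (chain_rank_inj ρ hstrict hch hyc hy₀c (hy.2.trans hy₀ρ.symm))
  · rw [if_neg hq]
    symm
    refine Finset.sum_eq_zero fun y _ => ?_
    rw [if_neg]
    rintro ⟨-, h⟩
    exact hq h

end GF



section Main

variable {P : Type*} [PartialOrder P] [Fintype P] [BoundedOrder P]

lemma Gch_eq_Fch (ρ : P → ℕ) (hbot : ρ ⊥ = 0)
    (hstrict : ∀ x y : P, x < y → ρ x < ρ y)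
    (hproper : ∀ x y : P, x ≤ y → ¬(x = ⊥ ∧ y = ⊤) → muP P x y = (-1) ^ (ρ y - ρ x)) :
    ∀ (U : Finset ℕ) (x : P), ⊥ < x → (U = ∅ → x ≠ ⊤) →
      Gch ρ x U = (-1) ^ (ρ x + 1) * Fch ρ x U := by
  suffices H : ∀ (k : ℕ) (U : Finset ℕ), U.card = k → ∀ x : P, ⊥ < x → (U = ∅ → x ≠ ⊤) →
      Gch ρ x U = (-1) ^ (ρ x + 1) * Fch ρ x U by
    intro U x h1 h2
    exact H _ U rfl x h1 h2
  intro k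
  induction k with
  | zero =>
    intro U hU x hx hxt
    rw [Finset.card_eq_zero] at hU
    subst hU
    have hxt' := hxt rfl
    have hmu := hproper ⊥ x hx.le (by rintro ⟨-, h2⟩; exact hxt' h2)
    rw [Gch_empty, Nch_eq_neg_muP ⊥ x hx, hmu, Fch_empty, hbot, Nat.sub_zero, mul_one, pow_succ]
    ring
  | succ k IH =>
    intro U hU x hx hxt
    have hUne : U.Nonempty := by rw [← Finset.card_pos, hU]; omega
    set u := U.max' hUne with hu
    have humem : u ∈ U := U.max'_mem hUne
    set U' := U.erase u with hU'
    have hU'card : U'.card = k := by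
      rw [hU', Finset.card_erase_of_mem humem, hU]
      omega
    have hUins : insert u U' = U := Finset.insert_erase humem
    have hlt : ∀ v ∈ U', v < u := fun v hv =>
      lt_of_le_of_ne (U.le_max' v (Finset.mem_of_mem_erase hv)) (Finset.ne_of_mem_erase hv)
    set Y := (IooF (⊥ : P) x).filter (fun y => ρ y = u) with hY
    have hYmem : ∀ y ∈ Y, (⊥ < y ∧ y < x) ∧ ρ y = u := by
      intro y hy
      rw [hY, Finset.mem_filter, mem_IooF] at hy
      exact hy
    -- the inner double sums
    have inner : ∀ y ∈ Y,
        (∑ c ∈ chainsIn (⊥ : P) x, if y ∈ c ∧ U ⊆ c.image ρ then (-1 : ℤ) ^ c.card else 0)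
          = (-1) ^ (ρ x + 1) * Fch ρ y U' ∧
        (∑ c ∈ chainsIn (⊥ : P) x, if y ∈ c ∧ c.image ρ = U then (1 : ℤ) else 0)
          = Fch ρ y U' := by
      intro y hy
      obtain ⟨⟨hy1, hy2⟩, hyρ⟩ := hYmem y hy
      have hynetop : y ≠ ⊤ := (hy2.trans_le le_top).ne
      have hurx : u < ρ x := hyρ ▸ hstrict y x hy2
      -- facts about parts
      have hfacts : ∀ c₁ ∈ chainsIn (⊥ : P) y, ∀ c₂ ∈ chainsIn y x,
          (∀ v ∈ c₁.image ρ, v < u) ∧ (∀ v ∈ c₂.image ρ, u < v) ∧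
          (insert y (c₁ ∪ c₂)).image ρ = insert u (c₁.image ρ ∪ c₂.image ρ) ∧
          (insert y (c₁ ∪ c₂)).card = c₁.card + c₂.card + 1 := by
        intro c₁ h1 c₂ h2
        rw [mem_chainsIn] at h1 h2
        have hlt1 : ∀ z ∈ c₁, z < y := fun z hz => (h1.2 (Finset.mem_coe.mpr hz)).2
        have hgt2 : ∀ z ∈ c₂, y < z := fun z hz => (h2.2 (Finset.mem_coe.mpr hz)).1
        refine ⟨?_, ?_, ?_, card_insert_union_chains y hlt1 hgt2⟩
        · intro v hv
          obtain ⟨z, hz, rfl⟩ := Finset.mem_image.mp hv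
          exact hyρ ▸ hstrict z y (hlt1 z hz)
        · intro v hv
          obtain ⟨z, hz, rfl⟩ := Finset.mem_image.mp hv
          exact hyρ ▸ hstrict y z (hgt2 z hz)
        · rw [Finset.image_insert, Finset.image_union, hyρ]
      constructor
      · -- G-part
        have split := sum_chainsIn_split (⊥ : P) x y hy1 hy2
          (fun c => if U ⊆ c.image ρ then (-1 : ℤ) ^ c.card else 0)
        rw [Finset.sum_congr rfl (fun c _ => ite_and _ _ _ _), split]
        have term_eq : ∀ c₁ ∈ chainsIn (⊥ : P) y, ∀ c₂ ∈ chainsIn y x,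
            (if U ⊆ (insert y (c₁ ∪ c₂)).image ρ
              then (-1 : ℤ) ^ (insert y (c₁ ∪ c₂)).card else 0)
            = (if U' ⊆ c₁.image ρ then -((-1 : ℤ) ^ c₁.card) else 0) * (-1) ^ c₂.card := by
          intro c₁ h1 c₂ h2
          obtain ⟨hA, hB, him, hcard⟩ := hfacts c₁ h1 c₂ h2
          have hcond : (U ⊆ (insert y (c₁ ∪ c₂)).image ρ) ↔ U' ⊆ c₁.image ρ := by
            rw [him]
            constructor
            · intro h v hv
              have hvU : v ∈ U := Finset.mem_of_mem_erase hv
              have := h hvU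
              rw [Finset.mem_insert, Finset.mem_union] at this
              rcases this with rfl | hvA | hvB
              · exact absurd rfl (Finset.ne_of_mem_erase hv)
              · exact hvA
              · exact absurd (hB v hvB) (asymm (hlt v hv))
            · intro h v hv
              rw [Finset.mem_insert, Finset.mem_union]
              rw [← hUins, Finset.mem_insert] at hv
              rcases hv with rfl | hv
              · exact Or.inl rfl
              · exact Or.inr (Or.inl (h hv))
          rw [hcard]
          by_cases hc : U' ⊆ c₁.image ρ
          · rw [if_pos (hcond.mpr hc), if_pos hc]
            ring
          · rw [if_neg (fun hh => hc (hcond.mp hh)), if_neg hc, zero_mul]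
        rw [Finset.sum_congr rfl
          (fun c₁ h1 => Finset.sum_congr rfl (fun c₂ h2 => term_eq c₁ h1 c₂ h2))]
        rw [← Finset.sum_mul_sum]
        have e1 : (∑ c₁ ∈ chainsIn (⊥ : P) y,
            if U' ⊆ c₁.image ρ then -((-1 : ℤ) ^ c₁.card) else 0) = -(Gch ρ y U') := by
          rw [Gch, ← Finset.sum_neg_distrib]
          exact Finset.sum_congr rfl fun c _ => by split <;> simp
        have e2 : (∑ c₂ ∈ chainsIn y x, ((-1 : ℤ)) ^ c₂.card) = Nch y x := rfl
        rw [e1, e2]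
        rw [IH U' hU'card y hy1 (fun _ => hynetop)]
        rw [Nch_eq_neg_muP y x hy2, hproper y x hy2.le
          (by rintro ⟨h1, -⟩; exact (hy1.ne' h1) ), hyρ]
        have : ((-1 : ℤ)) ^ (u + 1) * (-1) ^ (ρ x - u) = (-1) ^ (ρ x + 1) := by
          rw [← pow_add]
          congr 1
          omega
        calc -((-1 : ℤ) ^ (u + 1) * Fch ρ y U') * -(-1) ^ (ρ x - u)
            = ((-1 : ℤ) ^ (u + 1) * (-1) ^ (ρ x - u)) * Fch ρ y U' := by ring
          _ = (-1) ^ (ρ x + 1) * Fch ρ y U' := by rw [this]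
      · -- F-part
        have split := sum_chainsIn_split (⊥ : P) x y hy1 hy2
          (fun c => if c.image ρ = U then (1 : ℤ) else 0)
        rw [Finset.sum_congr rfl (fun c _ => ite_and _ _ _ _), split]
        have term_eq : ∀ c₁ ∈ chainsIn (⊥ : P) y, ∀ c₂ ∈ chainsIn y x,
            (if (insert y (c₁ ∪ c₂)).image ρ = U then (1 : ℤ) else 0)
            = (if c₁.image ρ = U' then (1 : ℤ) else 0) * (if c₂ = ∅ then (1 : ℤ) else 0) := by
          intro c₁ h1 c₂ h2
          obtain ⟨hA, hB, him, -⟩ := hfacts c₁ h1 c₂ h2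
          have hcond : ((insert y (c₁ ∪ c₂)).image ρ = U) ↔ (c₁.image ρ = U' ∧ c₂ = ∅) := by
            rw [him]
            constructor
            · intro h
              have hc2 : c₂ = ∅ := by
                rw [Finset.eq_empty_iff_forall_notMem]
                intro t ht
                have h1' : ρ t ∈ c₂.image ρ := Finset.mem_image_of_mem ρ ht
                have h2' : ρ t ∈ U := h ▸ (Finset.mem_insert_of_mem (Finset.mem_union_right _ h1'))
                exact absurd (U.le_max' _ h2') (not_le_of_gt (hB _ h1'))
              subst hc2
              rw [Finset.image_empty, Finset.union_empty] at h
              have hnotin : u ∉ c₁.image ρ := fun hc => absurd (hA u hc) (lt_irrefl u)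
              refine ⟨?_, rfl⟩
              rw [hU', ← h, Finset.erase_insert hnotin]
            · rintro ⟨h1', rfl⟩
              rw [Finset.image_empty, Finset.union_empty, h1', hUins]
          by_cases hc : c₁.image ρ = U' ∧ c₂ = ∅
          · rw [if_pos (hcond.mpr hc), if_pos hc.1, if_pos hc.2, mul_one]
          · rw [if_neg (fun hh => hc (hcond.mp hh))]
            rcases not_and_or.mp hc with h | h
            · rw [if_neg h, zero_mul]
            · rw [if_neg h, mul_zero]
        rw [Finset.sum_congr rfl
          (fun c₁ h1 => Finset.sum_congr rfl (fun c₂ h2 => term_eq c₁ h1 c₂ h2))]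
        rw [← Finset.sum_mul_sum]
        have e2 : (∑ c₂ ∈ chainsIn y x, if c₂ = ∅ then (1 : ℤ) else 0) = 1 := by
          rw [Finset.sum_ite_eq' (chainsIn y x) ∅ (fun _ => (1:ℤ))]
          simp [empty_mem_chainsIn]
        rw [e2, mul_one]
        rfl
    -- assemble
    have gA : Gch ρ x U = ∑ y ∈ Y, (-1 : ℤ) ^ (ρ x + 1) * Fch ρ y U' := by
      rw [Gch, group_by_rank ρ hstrict x u _ (fun c => U ⊆ c.image ρ)
        (fun c hc => hc humem)]
      exact Finset.sum_congr rfl fun y hy => (inner y hy).1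
    have gF : Fch ρ x U = ∑ y ∈ Y, Fch ρ y U' := by
      rw [Fch, group_by_rank ρ hstrict x u _ (fun c => c.image ρ = U)
        (fun c hc => hc ▸ humem)]
      exact Finset.sum_congr rfl fun y hy => (inner y hy).2
    rw [gA, gF, Finset.mul_sum]

end Main



section Assemble

variable {P : Type*} [PartialOrder P] [Fintype P] [BoundedOrder P]

lemma neg_one_pow_sub' (a b : ℕ) (h : b ≤ a) : (-1 : ℤ) ^ (a - b) = (-1) ^ a * (-1) ^ b := by
  have hb : ((-1 : ℤ)) ^ b * (-1) ^ b = 1 := by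
    rw [← pow_add]
    exact Even.neg_one_pow ⟨b, rfl⟩
  calc (-1 : ℤ) ^ (a - b) = (-1) ^ (a - b) * ((-1) ^ b * (-1) ^ b) := by rw [hb, mul_one]
    _ = ((-1) ^ (a - b) * (-1) ^ b) * (-1) ^ b := by ring
    _ = (-1) ^ a * (-1) ^ b := by rw [← pow_add, Nat.sub_add_cancel h]

lemma flagH_eq_Ft (ρ : P → ℕ) (S : Finset ℕ) :
    flagH P ρ S = (-1) ^ S.card * ∑ T ∈ S.powerset, (-1 : ℤ) ^ T.card * flagF P ρ T := by
  rw [flagH, Finset.mul_sum]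
  refine Finset.sum_congr rfl fun T hT => ?_
  have hle := Finset.card_le_card (Finset.mem_powerset.mp hT)
  rw [neg_one_pow_sub' _ _ hle, mul_assoc]

lemma flagF_empty (ρ : P → ℕ) : flagF P ρ (∅ : Finset ℕ) = 1 := by
  have : {c : Finset P | IsChain (· ≤ ·) (↑c : Set P) ∧ c.image ρ = ∅} = {∅} := by
    ext c
    simp only [Set.mem_setOf_eq, Finset.image_eq_empty, Set.mem_singleton_iff]
    constructor
    · rintro ⟨-, h⟩; exact h
    · rintro rfl; exact ⟨by simp [IsChain.empty], rfl⟩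
  rw [flagF, this, Set.ncard_singleton]
  rfl

lemma flagF_eq_Fch (n : ℕ) (ρ : P → ℕ) (hbot : ρ ⊥ = 0) (htop : ρ ⊤ = n + 2)
    {T : Finset ℕ} (hT : T ⊆ Finset.Icc 1 (n + 1)) :
    flagF P ρ T = Fch ρ (⊤ : P) T := by
  have hset : {c : Finset P | IsChain (· ≤ ·) (↑c : Set P) ∧ c.image ρ = T}
      = ↑((chainsIn (⊥ : P) ⊤).filter (fun c => c.image ρ = T)) := by
    ext c
    simp only [Set.mem_setOf_eq, Finset.coe_filter, Set.mem_setOf_eq, mem_chainsIn]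
    constructor
    · rintro ⟨hch, him⟩
      refine ⟨⟨hch, ?_⟩, him⟩
      intro z hz
      have hzρ : ρ z ∈ T := him ▸ Finset.mem_image_of_mem ρ (Finset.mem_coe.mp hz)
      have hzIcc := Finset.mem_Icc.mp (hT hzρ)
      constructor
      · refine lt_of_le_of_ne bot_le fun hb => ?_
        rw [← hb, hbot] at hzIcc
        omega
      · refine lt_of_le_of_ne le_top fun ht => ?_
        rw [ht, htop] at hzIcc
        omega
    · rintro ⟨⟨hch, -⟩, him⟩
      exact ⟨hch, him⟩
  rw [flagF, hset, Set.ncard_coe_finset, Fch, Finset.sum_boole]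

lemma key_identity (n : ℕ) (χ : ℤ) (ρ : P → ℕ) (hbot : ρ ⊥ = 0) (htop : ρ ⊤ = n + 2)
    (hstrict : ∀ x y : P, x < y → ρ x < ρ y)
    (hproper : ∀ x y : P, x ≤ y → ¬(x = ⊥ ∧ y = ⊤) → muP P x y = (-1) ^ (ρ y - ρ x))
    (hmu : muP P (⊥ : P) ⊤ = χ - 1)
    {S : Finset ℕ} (hS : S ⊆ Finset.Icc 1 (n + 1)) :
    (∑ T ∈ (Finset.Icc 1 (n + 1) \ S).powerset, (-1 : ℤ) ^ T.card * flagF P ρ T)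
      = (1 - χ) + (-1) ^ (n + 1) *
        ((∑ T ∈ S.powerset, (-1 : ℤ) ^ T.card * flagF P ρ T) - 1) := by
  have hne : (⊥ : P) ≠ ⊤ := by
    intro h
    rw [h, htop] at hbot
    omega
  have hbt : (⊥ : P) < ⊤ := bot_le.lt_of_ne hne
  have himage : ∀ c ∈ chainsIn (⊥ : P) ⊤, c.image ρ ⊆ Finset.Icc 1 (n + 1) := by
    intro c hc v hv
    rw [mem_chainsIn] at hc
    obtain ⟨z, hz, rfl⟩ := Finset.mem_image.mp hv
    have h1 := hstrict ⊥ z (hc.2 (Finset.mem_coe.mpr hz)).1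
    have h2 := hstrict z ⊤ (hc.2 (Finset.mem_coe.mpr hz)).2
    rw [hbot] at h1
    rw [htop] at h2
    rw [Finset.mem_Icc]
    omega
  set Sc := Finset.Icc 1 (n + 1) \ S with hSc
  -- The master sum H
  set H : ℤ := ∑ c ∈ chainsIn (⊥ : P) ⊤,
    (if c.image ρ ⊆ Sc then (-1 : ℤ) ^ c.card else 0) with hH
  -- Part 1 : H equals the LHS
  have part1 : H = ∑ T ∈ Sc.powerset, (-1 : ℤ) ^ T.card * flagF P ρ T := by
    have pointwise : ∀ c ∈ chainsIn (⊥ : P) ⊤,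
        (if c.image ρ ⊆ Sc then (-1 : ℤ) ^ c.card else 0)
          = ∑ T ∈ Sc.powerset, (if c.image ρ = T then (-1 : ℤ) ^ c.card else 0) := by
      intro c hc
      by_cases hcond : c.image ρ ⊆ Sc
      · rw [if_pos hcond]
        symm
        rw [Finset.sum_eq_single_of_mem (c.image ρ) (Finset.mem_powerset.mpr hcond)
          (fun T _ hne' => if_neg (fun h => hne' h.symm))]
        rw [if_pos rfl]
      · rw [if_neg hcond]
        symm
        refine Finset.sum_eq_zero fun T hT => ?_
        rw [if_neg]
        intro h
        exact hcond (h ▸ Finset.mem_powerset.mp hT)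
    rw [hH, Finset.sum_congr rfl pointwise, Finset.sum_comm]
    refine Finset.sum_congr rfl fun T hT => ?_
    have hTIcc : T ⊆ Finset.Icc 1 (n + 1) :=
      (Finset.mem_powerset.mp hT).trans (hSc ▸ Finset.sdiff_subset)
    rw [flagF_eq_Fch n ρ hbot htop hTIcc, Fch, Finset.mul_sum]
    refine Finset.sum_congr rfl fun c hc => ?_
    rw [mem_chainsIn] at hc
    by_cases h : c.image ρ = T
    · rw [if_pos h, if_pos h, mul_one]
      have hinj : Set.InjOn ρ ↑c := fun a ha b hb hab =>
        chain_rank_inj ρ hstrict hc.1 (Finset.mem_coe.mp ha) (Finset.mem_coe.mp hb) hab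
      rw [← h, Finset.card_image_of_injOn hinj]
    · rw [if_neg h, if_neg h, mul_zero]
  -- Part 2 : H equals the U-sum
  have part2 : H = ∑ U ∈ S.powerset, (-1 : ℤ) ^ U.card * Gch ρ (⊤ : P) U := by
    have pointwise : ∀ c ∈ chainsIn (⊥ : P) ⊤,
        (if c.image ρ ⊆ Sc then (-1 : ℤ) ^ c.card else 0)
          = ∑ U ∈ S.powerset, (-1 : ℤ) ^ U.card *
              (if U ⊆ c.image ρ then (-1 : ℤ) ^ c.card else 0) := by
      intro c hc
      have hA := himage c hc
      have indsum : (∑ U ∈ S.powerset,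
          (if U ⊆ c.image ρ then (-1 : ℤ) ^ U.card else 0))
            = if c.image ρ ⊆ Sc then 1 else 0 := by
        rw [← Finset.sum_filter]
        have hfil : S.powerset.filter (fun U => U ⊆ c.image ρ)
            = (S ∩ c.image ρ).powerset := by
          ext U
          simp only [Finset.mem_filter, Finset.mem_powerset, Finset.subset_inter_iff]
        rw [hfil, sum_powerset_neg_one_pow_card]
        congr 1
        rw [eq_iff_iff]
        constructor
        · intro h
          rw [hSc, Finset.subset_sdiff]
          refine ⟨hA, ?_⟩
          rw [Finset.disjoint_right]
          intro a haS haimg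
          have : a ∈ S ∩ c.image ρ := Finset.mem_inter.mpr ⟨haS, haimg⟩
          rw [h] at this
          exact absurd this (Finset.notMem_empty a)
        · intro h
          rw [hSc, Finset.subset_sdiff] at h
          rw [Finset.eq_empty_iff_forall_notMem]
          intro a ha
          rw [Finset.mem_inter] at ha
          exact Finset.disjoint_left.mp h.2.symm ha.1 ha.2
      calc (if c.image ρ ⊆ Sc then (-1 : ℤ) ^ c.card else 0)
          = (if c.image ρ ⊆ Sc then (1 : ℤ) else 0) * (-1) ^ c.card := by
            split <;> simp
        _ = (∑ U ∈ S.powerset, (if U ⊆ c.image ρ then (-1 : ℤ) ^ U.card else 0))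
              * (-1) ^ c.card := by rw [indsum]
        _ = ∑ U ∈ S.powerset, (-1 : ℤ) ^ U.card *
              (if U ⊆ c.image ρ then (-1 : ℤ) ^ c.card else 0) := by
            rw [Finset.sum_mul]
            refine Finset.sum_congr rfl fun U _ => ?_
            split <;> simp
    rw [hH, Finset.sum_congr rfl pointwise, Finset.sum_comm]
    refine Finset.sum_congr rfl fun U _ => ?_
    rw [Gch, Finset.mul_sum]
  -- Part 3 : evaluate the U-sum
  have part3 : (∑ U ∈ S.powerset, (-1 : ℤ) ^ U.card * Gch ρ (⊤ : P) U)
      = (1 - χ) + (-1) ^ (n + 1) *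
        ((∑ T ∈ S.powerset, (-1 : ℤ) ^ T.card * flagF P ρ T) - 1) := by
    have hempty : (∅ : Finset ℕ) ∈ S.powerset := Finset.empty_mem_powerset S
    rw [← Finset.add_sum_erase _ _ hempty, ← Finset.add_sum_erase _ _ hempty]
    have h0 : (-1 : ℤ) ^ (∅ : Finset ℕ).card * Gch ρ (⊤ : P) ∅ = 1 - χ := by
      rw [Finset.card_empty, pow_zero, one_mul, Gch_empty, Nch_eq_neg_muP ⊥ ⊤ hbt, hmu]
      ring
    have h0' : (-1 : ℤ) ^ (∅ : Finset ℕ).card * flagF P ρ ∅ = 1 := by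
      rw [Finset.card_empty, pow_zero, one_mul, flagF_empty]
    rw [h0, h0']
    have hrest : ∀ U ∈ S.powerset.erase ∅,
        (-1 : ℤ) ^ U.card * Gch ρ (⊤ : P) U
          = (-1) ^ (n + 1) * ((-1 : ℤ) ^ U.card * flagF P ρ U) := by
      intro U hU
      have hUne : U ≠ ∅ := Finset.ne_of_mem_erase hU
      have hUsub : U ⊆ Finset.Icc 1 (n + 1) :=
        (Finset.mem_powerset.mp (Finset.mem_of_mem_erase hU)).trans hS
      rw [Gch_eq_Fch ρ hbot hstrict hproper U ⊤ hbt (fun h => absurd h hUne), htop]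
      rw [← flagF_eq_Fch n ρ hbot htop hUsub]
      have hpow : ((-1 : ℤ)) ^ (n + 2 + 1) = (-1) ^ (n + 1) := by
        have : n + 2 + 1 = (n + 1) + 2 := by omega
        rw [this, pow_add]
        ring
      rw [hpow]
      ring
    rw [Finset.sum_congr rfl hrest, ← Finset.mul_sum]
    ring
  rw [← part1, part2, part3]

end Assemble


/-- Let `P` be the face poset (a graded poset of rank `n+2` all of whose proper
intervals are Eulerian, with `μ(P) = χ(M) - 1`) of a regular cell complex whose
geometric realization is a compact `n`-manifold `M`.  If `n` is even then
`h_S - h_{S̄} = (-1)^{|S|}(2 - χ(M))` for every `S ⊆ {1,…,n+1}`, and if `n` is odd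
then `h_S = h_{S̄}`. -/
theorem flagH_complement_manifold (n : ℕ) (χ : ℤ) (P : Type*) [Fintype P]
    [PartialOrder P] [BoundedOrder P] (ρ : P → ℕ)
    (hbot : ρ ⊥ = 0) (htop : ρ ⊤ = n + 2)
    (hstrict : ∀ x y : P, x < y → ρ x < ρ y)
    (hcov : ∀ x y : P, x ⋖ y → ρ y = ρ x + 1)
    (hproper : ∀ x y : P, x ≤ y → ¬(x = ⊥ ∧ y = ⊤) → muP P x y = (-1) ^ (ρ y - ρ x))
    (hmu : muP P (⊥ : P) ⊤ = χ - 1) :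
    (Even n → ∀ S ⊆ Finset.Icc 1 (n + 1),
      flagH P ρ S - flagH P ρ (Finset.Icc 1 (n + 1) \ S) = (-1) ^ S.card * (2 - χ)) ∧
    (Odd n → ∀ S ⊆ Finset.Icc 1 (n + 1),
      flagH P ρ S = flagH P ρ (Finset.Icc 1 (n + 1) \ S)) := by
  classical
  set Ft : Finset ℕ → ℤ := fun S => ∑ T ∈ S.powerset, (-1 : ℤ) ^ T.card * flagF P ρ T with hFt
  have key : ∀ S ⊆ Finset.Icc 1 (n + 1),
      Ft (Finset.Icc 1 (n + 1) \ S) = (1 - χ) + (-1) ^ (n + 1) * (Ft S - 1) :=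
    fun S hS => key_identity n χ ρ hbot htop hstrict hproper hmu hS
  have hHF : ∀ S : Finset ℕ, flagH P ρ S = (-1) ^ S.card * Ft S := fun S => flagH_eq_Ft ρ S
  have hIcc : (Finset.Icc 1 (n + 1)).card = n + 1 := by rw [Nat.card_Icc]; omega
  have hcardle : ∀ S ⊆ Finset.Icc 1 (n + 1), S.card ≤ n + 1 := by
    intro S hS
    have := Finset.card_le_card hS
    omega
  have hcards : ∀ S ⊆ Finset.Icc 1 (n + 1),
      (Finset.Icc 1 (n + 1) \ S).card = (n + 1) - S.card := by
    intro S hS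
    rw [Finset.card_sdiff_of_subset hS, hIcc]
  constructor
  · intro hn S hS
    have hkey := key S hS
    have hodd : Odd (n + 1) := Even.add_one hn
    rw [hodd.neg_one_pow] at hkey
    rw [hHF, hHF, hcards S hS, neg_one_pow_sub' (n + 1) S.card (hcardle S hS),
      hodd.neg_one_pow, hkey]
    ring
  · intro hn S hS
    have hScsub : Finset.Icc 1 (n + 1) \ S ⊆ Finset.Icc 1 (n + 1) := Finset.sdiff_subset
    have k1 := key S hS
    have k2 := key _ hScsub
    rw [Finset.sdiff_sdiff_eq_self hS] at k2
    have heven : Even (n + 1) := Odd.add_one hn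
    rw [heven.neg_one_pow] at k1 k2
    have hFtEq : Ft (Finset.Icc 1 (n + 1) \ S) = Ft S := by linarith
    rw [hHF, hHF, hcards S hS, neg_one_pow_sub' (n + 1) S.card (hcardle S hS),
      heven.neg_one_pow, hFtEq]
    ring
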